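/- arXiv:2108.08657 — 4 statements merged into one kernel-verified Lean document; each statement's English description precedes it below -/
import Mathlib

section
/- For every permutation w of [n+2], θ_n(w^r) = (θ_n(w))^r, where w^r denotes the reverse permutation. -/
namespace RSKPaper

/-- Schensted row insertion: the new row, and the bumped entry (if any). -/
def insertRow : List ℕ → ℕ → List ℕ × Option ℕ
  | [], x => ([x], none)
  | y :: ys, x =>
    if x < y then (x :: ys, some y)
    else
      let p := insertRow ys x
      (y :: p.1, p.2)

/-- Schensted insertion of `x` into a tableau (a list of rows). -/
def insertTableau : List (List ℕ) → ℕ → List (List ℕ)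
  | [], x => [[x]]
  | r :: rs, x =>
    match insertRow r x with
    | (r', none) => r' :: rs
    | (r', some y) => r' :: insertTableau rs y

/-- The shape of a tableau: its list of row lengths. -/
def shape (T : List (List ℕ)) : List ℕ := T.map List.length

/-- Index of the first row whose length differs between `P` and `P'`. -/
def diffRow (P P' : List (List ℕ)) : ℕ :=
  (List.range P'.length).findIdx
    (fun i => (P.getD i []).length != (P'.getD i []).length)

/-- Append entry `k` at the end of row `r` of `Q` (creating a new row if needed). -/
def appendAt (Q : List (List ℕ)) (r k : ℕ) : List (List ℕ) :=
  if r < Q.length then Q.set r (Q.getD r [] ++ [k]) else Q ++ [[k]]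

/-- One step of the RSK algorithm on the state `(P, Q, next label)`. -/
def rskStep (st : List (List ℕ) × List (List ℕ) × ℕ) (x : ℕ) :
    List (List ℕ) × List (List ℕ) × ℕ :=
  let P' := insertTableau st.1 x
  (P', appendAt st.2.1 (diffRow st.1 P') st.2.2, st.2.2 + 1)

/-- The insertion tableau `P(w)` of a permutation in one-line notation. -/
def RSKP (w : List ℕ) : List (List ℕ) := (w.foldl rskStep ([], [], 1)).1

/-- The recording tableau `Q(w)` of a permutation in one-line notation. -/
def RSKQ (w : List ℕ) : List (List ℕ) := (w.foldl rskStep ([], [], 1)).2.1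

/-- `w` is a permutation of `[n] = {1, …, n}` written in one-line notation. -/
def IsPerm (n : ℕ) (w : List ℕ) : Prop := w.Perm (List.range' 1 n)

/-- The map `φ_{a,b} : S_n → S_{n+2}`. -/
def phi (a b : ℕ) (w : List ℕ) : List ℕ :=
  a :: (w.map (fun x => if x < min a b then x
    else if x < max a b - 1 then x + 1 else x + 2) ++ [b])

/-- The map `θ_n : S_{n+2} → S_n`. -/
def theta (w : List ℕ) : List ℕ :=
  let c := min (w.headD 0) (w.getLastD 0)
  let d := max (w.headD 0) (w.getLastD 0)
  (w.drop 1).dropLast.map (fun x => if x < c then x else if x < d then x - 1 else x - 2)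

/-- The complement of a permutation of `[n]` in one-line notation. -/
def complement (n : ℕ) (w : List ℕ) : List ℕ := w.map (fun x => n + 1 - x)

/-- The symmetric hook shape `((n+1)/2, 1^{(n-1)/2})` of size `n` (for odd `n`). -/
def hookShape (n : ℕ) : List ℕ := (n + 1) / 2 :: List.replicate ((n - 1) / 2) 1

/-- Conjugate (transpose) of a shape. -/
def conjShape (s : List ℕ) : List ℕ :=
  (List.range (s.headD 0)).map (fun j => s.countP (fun r => decide (j < r)))

def getCell? (T : List (List ℕ)) (i j : ℕ) : Option ℕ := (T.getD i [])[j]?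

def hasCell (T : List (List ℕ)) (i j : ℕ) : Bool := j < (T.getD i []).length

def setCell (T : List (List ℕ)) (i j x : ℕ) : List (List ℕ) :=
  T.set i ((T.getD i []).set j x)

def removeCell (T : List (List ℕ)) (i j : ℕ) : List (List ℕ) :=
  let r := (T.getD i []).take j
  if r.isEmpty then T.take i else T.set i r

/-- Forward jeu de taquin slide with the hole at cell `(i, j)`, with fuel. -/
def slide : ℕ → List (List ℕ) → ℕ → ℕ → List (List ℕ)
  | 0, T, _, _ => T
  | fuel + 1, T, i, j =>
    match getCell? T i (j + 1), getCell? T (i + 1) j with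
    | none, none => removeCell T i j
    | some x, none => slide fuel (setCell T i j x) i (j + 1)
    | none, some y => slide fuel (setCell T i j y) (i + 1) j
    | some x, some y =>
      if x < y then slide fuel (setCell T i j x) i (j + 1)
      else slide fuel (setCell T i j y) (i + 1) j

/-- The number of cells of a tableau. -/
def size (T : List (List ℕ)) : ℕ := (shape T).sum

/-- The delta operator: remove the minimal (top-left) entry and slide. -/
def delta (T : List (List ℕ)) : List (List ℕ) := slide (size T) T 0 0

/-- Entry of the evacuation tableau at cell `(i, j)`:
`n - k` where the cell is vacated when passing from `Δ^k T` to `Δ^(k+1) T`. -/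
def evacEntry (T : List (List ℕ)) (i j : ℕ) : ℕ :=
  size T - (List.range (size T)).countP (fun t => hasCell (delta^[t + 1] T) i j)

/-- The Schützenberger evacuation tableau `ε(T)`. -/
def evacuation (T : List (List ℕ)) : List (List ℕ) :=
  T.mapIdx (fun i row => row.mapIdx (fun j _ => evacEntry T i j))

/-- Transpose of a tableau. -/
def transposeT (T : List (List ℕ)) : List (List ℕ) :=
  (List.range ((T.headD []).length)).map (fun j => T.filterMap (fun row => row[j]?))

/-- `T` is a standard Young tableau (with entries `1, …, size T`). -/
def IsSYT (T : List (List ℕ)) : Prop :=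
  T.Chain' (fun r s => s.length ≤ r.length) ∧
  (∀ r ∈ T, r ≠ []) ∧
  (∀ r ∈ T, r.Chain' (· < ·)) ∧
  (∀ c ∈ transposeT T, c.Chain' (· < ·)) ∧
  T.flatten.Perm (List.range' 1 (size T))

/-- `l` is a partition of `n`. -/
def IsPartition (l : List ℕ) (n : ℕ) : Prop :=
  (∀ x ∈ l, 0 < x) ∧ l.Chain' (fun a b => b ≤ a) ∧ l.sum = n

end RSKPaper

open RSKPaper in
/-- `θ_n` commutes with reversal. -/
theorem stmt_7 (n : ℕ) (w : List ℕ) (hw : IsPerm (n + 2) w) :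
    theta w.reverse = (theta w).reverse := by

  unfold theta
  have h1 : w.reverse.headD 0 = w.getLastD 0 := by
    simp only [List.headD_eq_head?, List.head?_reverse, List.getLastD_eq_getLast?]
  have h2 : w.reverse.getLastD 0 = w.headD 0 := by
    simp only [List.headD_eq_head?, List.getLast?_reverse, List.getLastD_eq_getLast?]
  have h3 : (w.reverse.drop 1).dropLast = ((w.drop 1).dropLast).reverse := by
    rw [List.drop_one, List.tail_reverse, List.dropLast_reverse, List.drop_one]
    rw [List.tail_dropLast]
  rw [h1, h2, h3, Nat.min_comm, Nat.max_comm, List.map_reverse]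
end

section
/- For every permutation w of [n+2], θ_n(w^c) = (θ_n(w))^c, where w^c denotes the complement permutation. -/
open RSKPaper in
theorem theta_cons_concat (a b : ℕ) (l : List ℕ) :
    theta (a :: (l ++ [b])) =
      l.map (fun x => if x < min a b then x else if x < max a b then x - 1 else x - 2) := by
  have h1 : (a :: (l ++ [b])).getLastD 0 = b := by
    rw [← List.cons_append, List.getLastD_concat]
  simp only [theta, h1, List.headD_cons, List.drop_succ_cons, List.drop_zero,
    List.dropLast_concat]

open RSKPaper in
/-- `θ_n` commutes with complementation. -/
theorem stmt_8 (n : ℕ) (w : List ℕ) (hw : IsPerm (n + 2) w) :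
    theta (complement (n + 2) w) = complement n (theta w) := by
  have hlen : w.length = n + 2 := by
    have := hw.length_eq
    simpa using this
  obtain ⟨a, t, rfl⟩ : ∃ a t, w = a :: t := by
    cases w with
    | nil => simp at hlen
    | cons a t => exact ⟨a, t, rfl⟩
  have ht : t ≠ [] := by
    intro h; subst h; simp at hlen
  obtain ⟨l, b, rfl⟩ : ∃ l b, t = l ++ [b] :=
    ⟨t.dropLast, t.getLast ht, (List.dropLast_append_getLast ht).symm⟩
  have hnd : (a :: (l ++ [b])).Nodup := hw.nodup_iff.mpr (List.nodup_range' ..)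
  have hmem : ∀ x ∈ a :: (l ++ [b]), 1 ≤ x ∧ x ≤ n + 2 := by
    intro x hx
    have := hw.mem_iff.mp hx
    rw [List.mem_range'] at this
    omega
  have ha := hmem a (by simp)
  have hb := hmem b (by simp)
  have hanl : a ∉ l ++ [b] := (List.nodup_cons.mp hnd).1
  have hab : a ≠ b := by intro h; exact hanl (by simp [h])
  have hbnl : b ∉ l := by
    have := (List.nodup_cons.mp hnd).2
    rcases List.nodup_append'.mp this with ⟨_, _, hdisj⟩
    intro h; exact hdisj h (by simp)
  have hcompl : complement (n + 2) (a :: (l ++ [b]))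
      = (n + 3 - a) :: ((l.map (fun x => n + 3 - x)) ++ [n + 3 - b]) := by
    simp only [complement, List.map_cons, List.map_append, List.map_cons, List.map_nil]
  rw [hcompl, theta_cons_concat, theta_cons_concat, complement, List.map_map, List.map_map]
  refine List.map_congr_left ?_
  intro x hx
  have hxm := hmem x (by simp [hx])
  have hxa : x ≠ a := by intro h; exact hanl (by simp [← h, hx])
  have hxb : x ≠ b := by intro h; exact hbnl (h ▸ hx)
  simp only [Function.comp]
  split_ifs <;> omega
end

section
/- For every even n, there are no permutations w ∈ S_n with Q(w) = Q(w^r). -/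
namespace RSKPaper

lemma insertRow_none {R R' : List ℕ} {x : ℕ}
    (h : insertRow R x = (R', none)) : R' = R ++ [x] ∧ ∀ e ∈ R, ¬ x < e := by
  induction R generalizing R' with
  | nil =>
      simp only [insertRow, Prod.mk.injEq] at h
      simp [← h.1]
  | cons a R ih =>
      simp only [insertRow] at h
      split_ifs at h with hxa
      · simp at h
      · rcases hI : insertRow R x with ⟨R0, o⟩
        simp only [hI, Prod.mk.injEq] at h
        obtain ⟨rfl, rfl⟩ := h
        obtain ⟨rfl, hall⟩ := ih hI
        refine ⟨rfl, ?_⟩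
        intro e he
        rcases List.mem_cons.1 he with rfl | he
        · exact hxa
        · exact hall e he

lemma insertRow_some {R R' : List ℕ} {x z : ℕ}
    (h : insertRow R x = (R', some z)) :
    x < z ∧ ∃ A B, R = A ++ z :: B ∧ R' = A ++ x :: B ∧ ∀ e ∈ A, ¬ x < e := by
  induction R generalizing R' with
  | nil => simp [insertRow] at h
  | cons a R ih =>
      simp only [insertRow] at h
      split_ifs at h with hxa
      · simp only [Prod.mk.injEq, Option.some.injEq] at h
        obtain ⟨rfl, rfl⟩ := h
        exact ⟨hxa, [], R, by simp⟩
      · rcases hI : insertRow R x with ⟨R0, o⟩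
        simp only [hI, Prod.mk.injEq] at h
        obtain ⟨rfl, rfl⟩ := h
        obtain ⟨hxz, A, B, rfl, rfl, hA⟩ := ih hI
        refine ⟨hxz, a :: A, B, rfl, rfl, ?_⟩
        intro e he
        rcases List.mem_cons.1 he with rfl | he
        · exact hxa
        · exact hA e he

lemma insertRow_eq_none {R : List ℕ} {x : ℕ} (h : ∀ e ∈ R, ¬ x < e) :
    insertRow R x = (R ++ [x], none) := by
  induction R with
  | nil => simp [insertRow]
  | cons a R ih =>
      simp only [insertRow, if_neg (h a (by simp))]
      rw [ih (fun e he => h e (by simp [he]))]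
      simp

lemma insertRow_isSome {R : List ℕ} {x e : ℕ} (he : e ∈ R) (hxe : x < e) :
    ∃ R' z, insertRow R x = (R', some z) := by
  induction R with
  | nil => simp at he
  | cons a R ih =>
      by_cases hxa : x < a
      · exact ⟨x :: R, a, by simp [insertRow, hxa]⟩
      · rcases List.mem_cons.1 he with rfl | he
        · exact absurd hxe hxa
        · obtain ⟨R', z, hI⟩ := ih he
          exact ⟨a :: R', z, by simp [insertRow, hxa, hI]⟩

end RSKPaper

namespace RSKPaper

lemma bump_facts {R R' : List ℕ} {x z : ℕ} (hR : R.Pairwise (· < ·)) (hx : x ∉ R)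
    (h : insertRow R x = (R', some z)) :
    z ∈ R ∧ x < z ∧ R'.Pairwise (· < ·) ∧ x ∈ R' ∧ (∀ e ∈ R', e = x ∨ e ∈ R) ∧
      (∀ e ∈ R, x < e → z ≤ e) ∧ R'.length = R.length := by
  obtain ⟨hxz, A, B, rfl, rfl, hA⟩ := insertRow_some h
  rw [List.pairwise_append] at hR
  obtain ⟨hpA, hpzB, hcross⟩ := hR
  rw [List.pairwise_cons] at hpzB
  obtain ⟨hzB, hpB⟩ := hpzB
  have hAx : ∀ e ∈ A, e < x := by
    intro e he
    rcases lt_or_eq_of_le (not_lt.1 (hA e he)) with h' | h'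
    · exact h'
    · exact absurd (h' ▸ he) (by simpa using fun h'' => hx (by simp [h'']))
  refine ⟨by simp, hxz, ?_, by simp, ?_, ?_, by simp⟩
  · rw [List.pairwise_append]
    refine ⟨hpA, ?_, ?_⟩
    · rw [List.pairwise_cons]
      exact ⟨fun b hb => hxz.trans (hzB b hb), hpB⟩
    · intro a ha b hb
      rcases List.mem_cons.1 hb with rfl | hb
      · exact hAx a ha
      · exact hcross a ha b (by simp [hb])
  · intro e he
    rcases List.mem_append.1 he with he | he
    · exact Or.inr (by simp [he])
    · rcases List.mem_cons.1 he with rfl | he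
      · exact Or.inl rfl
      · exact Or.inr (by simp [he])
  · intro e he hxe
    rcases List.mem_append.1 he with he | he
    · exact absurd hxe (hA e he)
    · rcases List.mem_cons.1 he with rfl | he
      · exact le_rfl
      · exact le_of_lt (hzB e he)

lemma append_pairwise {R : List ℕ} {x : ℕ} (hR : R.Pairwise (· < ·)) (hx : x ∉ R)
    (h : ∀ e ∈ R, ¬ x < e) : (R ++ [x]).Pairwise (· < ·) := by
  rw [List.pairwise_append]
  refine ⟨hR, by simp, ?_⟩
  intro a ha b hb
  simp only [List.mem_singleton] at hb
  subst hb
  rcases lt_or_eq_of_le (not_lt.1 (h a ha)) with h' | h'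
  · exact h'
  · exact absurd (h' ▸ ha) hx

end RSKPaper

namespace RSKPaper

lemma insertTableau_flatten (T : List (List ℕ)) (x : ℕ) :
    (insertTableau T x).flatten.Perm (x :: T.flatten) := by
  induction T generalizing x with
  | nil => simp [insertTableau]
  | cons R rs ih =>
      rcases hI : insertRow R x with ⟨R', o⟩
      cases o with
      | none =>
          obtain ⟨rfl, -⟩ := insertRow_none hI
          simp only [insertTableau, hI, List.flatten_cons]
          simpa using (List.perm_middle (a := x) (l₁ := R) (l₂ := rs.flatten))
      | some z =>
          obtain ⟨hxz, A, B, rfl, rfl, -⟩ := insertRow_some hI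
          simp only [insertTableau, hI, List.flatten_cons]
          refine ((ih z).append_left (A ++ x :: B)).trans ?_
          have h2 : (A ++ x :: B) ++ (z :: rs.flatten) = A ++ x :: (B ++ z :: rs.flatten) := by
            simp
          rw [h2]
          refine List.perm_middle.trans ?_
          refine ((List.perm_middle.append_left A).cons x).trans ?_
          have h3 : A ++ z :: (B ++ rs.flatten) = (A ++ z :: B) ++ rs.flatten := by simp
          rw [h3]

lemma insertTableau_rows {T : List (List ℕ)} {x : ℕ}
    (hT : ∀ R ∈ T, R.Pairwise (· < ·)) (hnd : (x :: T.flatten).Nodup) :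
    ∀ R ∈ insertTableau T x, R.Pairwise (· < ·) := by
  induction T generalizing x with
  | nil => simp [insertTableau]
  | cons R rs ih =>
      have hxR : x ∉ R := fun h => (List.nodup_cons.1 hnd).1 (by simp [h])
      rcases hI : insertRow R x with ⟨R', o⟩
      cases o with
      | none =>
          obtain ⟨rfl, hall⟩ := insertRow_none hI
          simp only [insertTableau, hI]
          intro S hS
          rcases List.mem_cons.1 hS with rfl | hS
          · exact append_pairwise (hT R (by simp)) hxR hall
          · exact hT S (by simp [hS])
      | some z =>
          obtain ⟨hz, -, hp, -, -, -, -⟩ :=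
            bump_facts (hT R (by simp)) hxR hI
          simp only [insertTableau, hI]
          intro S hS
          rcases List.mem_cons.1 hS with rfl | hS
          · exact hp
          · refine ih (fun S hS => hT S (by simp [hS])) ?_ S hS
            have h1 := List.nodup_cons.1 hnd
            have h2 : (R ++ rs.flatten).Nodup := by simpa using h1.2
            rw [List.nodup_cons]
            refine ⟨?_, (List.Nodup.of_append_right h2)⟩
            exact fun hzf => (List.disjoint_of_nodup_append h2) hz hzf

end RSKPaper

namespace RSKPaper

lemma findIdx_map {α β : Type} (f : α → β) (l : List α) (p : β → Bool) :
    (l.map f).findIdx p = l.findIdx (fun a => p (f a)) := by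
  induction l with
  | nil => rfl
  | cons a l ih => simp [List.findIdx_cons, ih]

lemma diffRow_cons_eqlen {R R' : List ℕ} {rs rs' : List (List ℕ)}
    (h : R.length = R'.length) :
    diffRow (R :: rs) (R' :: rs') = diffRow rs rs' + 1 := by
  unfold diffRow
  have hlen : (R' :: rs').length = rs'.length + 1 := by simp
  rw [hlen, List.range_succ_eq_map, List.findIdx_cons]
  simp only [List.getD_cons_zero, h, bne_self_eq_false, cond_false]
  rw [findIdx_map]
  congr 1

lemma diffRow_cons_nelen {R R' : List ℕ} {rs rs' : List (List ℕ)}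
    (h : R.length ≠ R'.length) :
    diffRow (R :: rs) (R' :: rs') = 0 := by
  unfold diffRow
  have hlen : (R' :: rs').length = rs'.length + 1 := by simp
  rw [hlen, List.range_succ_eq_map, List.findIdx_cons]
  have hb : (((R :: rs).getD 0 []).length != ((R' :: rs').getD 0 []).length) = true := by
    simpa using h
  simp only [List.getD_cons_zero] at hb ⊢
  rw [hb]
  rfl

lemma diffRow_nil (x : ℕ) : diffRow [] [[x]] = 0 := rfl

lemma insertTableau_none {R R' : List ℕ} {rs : List (List ℕ)} {x : ℕ}
    (h : insertRow R x = (R', none)) :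
    insertTableau (R :: rs) x = R' :: rs := by
  simp [insertTableau, h]

lemma insertTableau_some {R R' : List ℕ} {rs : List (List ℕ)} {x z : ℕ}
    (h : insertRow R x = (R', some z)) :
    insertTableau (R :: rs) x = R' :: insertTableau rs z := by
  simp [insertTableau, h]

lemma dR_nil (x : ℕ) : diffRow [] (insertTableau [] x) = 0 := rfl

lemma dR_cons_none {R R' : List ℕ} {rs : List (List ℕ)} {x : ℕ}
    (h : insertRow R x = (R', none)) :
    diffRow (R :: rs) (insertTableau (R :: rs) x) = 0 := by
  rw [insertTableau_none h]
  obtain ⟨rfl, -⟩ := insertRow_none h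
  exact diffRow_cons_nelen (by simp)

lemma dR_cons_some {R R' : List ℕ} {rs : List (List ℕ)} {x z : ℕ}
    (h : insertRow R x = (R', some z)) :
    diffRow (R :: rs) (insertTableau (R :: rs) x)
      = diffRow rs (insertTableau rs z) + 1 := by
  rw [insertTableau_some h]
  obtain ⟨-, A, B, rfl, rfl, -⟩ := insertRow_some h
  exact diffRow_cons_eqlen (by simp)

lemma insert_spec (T : List (List ℕ)) (x : ℕ) :
    (diffRow T (insertTableau T x) = T.length
        ∧ (insertTableau T x).length = T.length + 1)
      ∨ (diffRow T (insertTableau T x) < T.length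
        ∧ (insertTableau T x).length = T.length) := by
  induction T generalizing x with
  | nil => exact Or.inl ⟨rfl, rfl⟩
  | cons R rs ih =>
      rcases hI : insertRow R x with ⟨R', o⟩
      cases o with
      | none =>
          rw [dR_cons_none hI, insertTableau_none hI]
          exact Or.inr ⟨by simp, by simp⟩
      | some z =>
          rw [dR_cons_some hI, insertTableau_some hI]
          rcases ih z with ⟨h1, h2⟩ | ⟨h1, h2⟩
          · exact Or.inl ⟨by simp [h1], by simp [h2]⟩
          · exact Or.inr ⟨by simp only [List.length_cons]; omega, by simp [h2]⟩

end RSKPaper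

namespace RSKPaper

lemma key (T : List (List ℕ)) (x y : ℕ)
    (hT : ∀ R ∈ T, R.Pairwise (· < ·)) (hnd : (x :: y :: T.flatten).Nodup) :
    (x < y → diffRow (insertTableau T x) (insertTableau (insertTableau T x) y)
        ≤ diffRow T (insertTableau T x)) ∧
    (y < x → diffRow T (insertTableau T x)
        < diffRow (insertTableau T x) (insertTableau (insertTableau T x) y)) := by
  induction T generalizing x y with
  | nil =>
      constructor
      · intro hxy
        have h2 : insertRow [x] y = ([x] ++ [y], none) :=
          insertRow_eq_none (by simp; omega)
        rw [show insertTableau [] x = [[x]] from rfl] at *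
        rw [dR_cons_none h2, diffRow_nil]
      · intro hyx
        have h2 : insertRow [x] y = ([y], some x) := by
          simp [insertRow, hyx]
        rw [show insertTableau [] x = [[x]] from rfl] at *
        rw [dR_cons_some h2, diffRow_nil]
        omega
  | cons R rs ih =>
      have hRp : R.Pairwise (· < ·) := hT R (by simp)
      have hTrs : ∀ S ∈ rs, S.Pairwise (· < ·) := fun S hS => hT S (by simp [hS])
      have hnd' : (x :: y :: (R ++ rs.flatten)).Nodup := by simpa using hnd
      rw [List.nodup_cons] at hnd'
      obtain ⟨hx', hnd2⟩ := hnd'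
      rw [List.nodup_cons] at hnd2
      obtain ⟨hy', hndRF⟩ := hnd2
      have hxney : x ≠ y := fun h => hx' (by simp [h])
      have hxR : x ∉ R := fun h => hx' (by simp [h])
      have hxF : x ∉ rs.flatten := fun h => hx' (by simp [h])
      have hyR : y ∉ R := fun h => hy' (by simp [h])
      have hyF : y ∉ rs.flatten := fun h => hy' (by simp [h])
      have hndF : rs.flatten.Nodup := hndRF.of_append_right
      have hdisj : ∀ e ∈ R, e ∉ rs.flatten :=
        fun e he hf => (List.disjoint_of_nodup_append hndRF) he hf
      rcases hI : insertRow R x with ⟨R1, o⟩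
      cases o with
      | none =>
          obtain ⟨rfl, hall⟩ := insertRow_none hI
          constructor
          · intro hxy
            have h2 : insertRow (R ++ [x]) y = ((R ++ [x]) ++ [y], none) := by
              refine insertRow_eq_none ?_
              intro e he
              rcases List.mem_append.1 he with he | he
              · have := hall e he; omega
              · simp at he; omega
            rw [dR_cons_none hI, insertTableau_none hI, dR_cons_none h2]
          · intro hyx
            obtain ⟨R2, z', h2⟩ := insertRow_isSome (R := R ++ [x]) (x := y) (e := x) (by simp) hyx
            rw [dR_cons_none hI, insertTableau_none hI, dR_cons_some h2]
            omega
      | some z =>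
          obtain ⟨hxz, A, B, hRdec, hR1dec, hA⟩ := insertRow_some hI
          obtain ⟨hzR, -, hR1p, hxR1, hmemR1, hminR, hlenR1⟩ := bump_facts hRp hxR hI
          have hyR1 : y ∉ R1 := by
            intro hy1
            rcases hmemR1 y hy1 with rfl | h'
            · exact hxney rfl
            · exact hyR h'
          have hr1 := dR_cons_some (rs := rs) hI
          rcases h2 : insertRow R1 y with ⟨R2, o2⟩
          cases o2 with
          | none =>
              obtain ⟨rfl, hall2⟩ := insertRow_none h2
              constructor
              · intro hxy
                rw [hr1, insertTableau_some hI, dR_cons_none h2]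
                omega
              · intro hyx
                exact absurd hyx (hall2 x hxR1)
          | some z' =>
              obtain ⟨hz'R1, hyz', hR2p, hyR2, hmemR2, hminR1, hlenR2⟩ :=
                bump_facts hR1p hyR1 h2
              have hr2 : diffRow (insertTableau (R :: rs) x)
                  (insertTableau (insertTableau (R :: rs) x) y)
                  = diffRow (insertTableau rs z)
                      (insertTableau (insertTableau rs z) z') + 1 := by
                rw [insertTableau_some hI, dR_cons_some h2]
              have hz'mem : z' = x ∨ z' ∈ R := hmemR1 z' hz'R1
              have hz'F : z' ∉ rs.flatten := by
                rcases hz'mem with rfl | h'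
                · exact hxF
                · exact hdisj z' h'
              have hzF : z ∉ rs.flatten := hdisj z hzR
              constructor
              · intro hxy
                -- here z < z'
                have hxz' : x < z' := hxy.trans hyz'
                have hz'B : z' ∈ B := by
                  rw [hR1dec] at hz'R1
                  rcases List.mem_append.1 hz'R1 with h' | h'
                  · exact absurd hxz' (hA z' h')
                  · rcases List.mem_cons.1 h' with rfl | h'
                    · exact absurd hxz' (lt_irrefl _)
                    · exact h'
                have hzz' : z < z' := by
                  have := hRdec ▸ hRp
                  rw [List.pairwise_append, List.pairwise_cons] at this
                  exact this.2.1.1 z' hz'B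
                have hih := (ih z z' hTrs (by
                  rw [List.nodup_cons, List.nodup_cons]
                  refine ⟨?_, ?_, hndF⟩
                  · simp only [List.mem_cons]
                    push_neg
                    exact ⟨ne_of_lt hzz', hzF⟩
                  · exact hz'F)).1 hzz'
                rw [hr1, hr2]
                omega
              · intro hyx
                -- here z' < z
                have hz'x : z' ≤ x := hminR1 x hxR1 hyx
                have hz'z : z' < z := lt_of_le_of_lt hz'x hxz
                have hih := (ih z z' hTrs (by
                  rw [List.nodup_cons, List.nodup_cons]
                  refine ⟨?_, ?_, hndF⟩
                  · simp only [List.mem_cons]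
                    push_neg
                    exact ⟨(ne_of_lt hz'z).symm, hzF⟩
                  · exact hz'F)).2 hz'z
                rw [hr1, hr2]
                omega

end RSKPaper

namespace RSKPaper

def rowOf (Q : List (List ℕ)) (k : ℕ) : ℕ := Q.findIdx (fun R => decide (k ∈ R))

lemma appendAt_nil (r m : ℕ) : appendAt [] r m = [[m]] := by simp [appendAt]

lemma appendAt_cons_zero (q : List ℕ) (Q : List (List ℕ)) (m : ℕ) :
    appendAt (q :: Q) 0 m = (q ++ [m]) :: Q := by
  simp [appendAt]

lemma appendAt_cons_succ (q : List ℕ) (Q : List (List ℕ)) (r m : ℕ) :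
    appendAt (q :: Q) (r + 1) m = q :: appendAt Q r m := by
  unfold appendAt
  by_cases h : r < Q.length
  · rw [if_pos (by simp; omega), if_pos h]
    simp [List.set_cons_succ, List.getD_cons_succ]
  · rw [if_neg (by simp; omega), if_neg h]
    simp

lemma appendAt_length (Q : List (List ℕ)) (r m : ℕ) :
    (appendAt Q r m).length = if r < Q.length then Q.length else Q.length + 1 := by
  unfold appendAt
  split <;> simp

lemma mem_flatten_appendAt_self (Q : List (List ℕ)) (r m : ℕ) :
    m ∈ (appendAt Q r m).flatten := by
  induction Q generalizing r with
  | nil => simp [appendAt_nil]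
  | cons q Q ih =>
      cases r with
      | zero => simp [appendAt_cons_zero]
      | succ r => simp [appendAt_cons_succ, ih]

lemma mem_flatten_appendAt_of_mem {Q : List (List ℕ)} {e : ℕ} (r m : ℕ)
    (h : e ∈ Q.flatten) : e ∈ (appendAt Q r m).flatten := by
  induction Q generalizing r with
  | nil => simp at h
  | cons q Q ih =>
      cases r with
      | zero =>
          simp only [appendAt_cons_zero, List.flatten_cons, List.mem_append] at h ⊢
          rcases h with h | h
          · exact Or.inl (by simp [h])
          · exact Or.inr h
      | succ r =>
          simp only [appendAt_cons_succ, List.flatten_cons, List.mem_append] at h ⊢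
          rcases h with h | h
          · exact Or.inl h
          · exact Or.inr (ih r h)

lemma mem_flatten_appendAt {Q : List (List ℕ)} {e : ℕ} {r m : ℕ}
    (h : e ∈ (appendAt Q r m).flatten) : e ∈ Q.flatten ∨ e = m := by
  induction Q generalizing r with
  | nil => simp [appendAt_nil] at h; exact Or.inr h
  | cons q Q ih =>
      cases r with
      | zero =>
          simp only [appendAt_cons_zero, List.flatten_cons, List.mem_append] at h ⊢
          rcases h with h | h
          · rcases h with h | h
            · exact Or.inl (Or.inl h)
            · simp at h; exact Or.inr h
          · exact Or.inl (Or.inr h)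
      | succ r =>
          simp only [appendAt_cons_succ, List.flatten_cons, List.mem_append] at h ⊢
          rcases h with h | h
          · exact Or.inl (Or.inl h)
          · rcases ih h with h' | h'
            · exact Or.inl (Or.inr h')
            · exact Or.inr h'

lemma rowOf_appendAt_ne {Q : List (List ℕ)} {k m : ℕ} (r : ℕ)
    (hk : k ∈ Q.flatten) (hne : k ≠ m) :
    rowOf (appendAt Q r m) k = rowOf Q k := by
  induction Q generalizing r with
  | nil => simp at hk
  | cons q Q ih =>
      cases r with
      | zero =>
          rw [appendAt_cons_zero]
          unfold rowOf
          rw [List.findIdx_cons, List.findIdx_cons]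
          have : (k ∈ q ++ [m]) = (k ∈ q) := by simp [hne]
          by_cases hq : k ∈ q
          · simp [hq, hne]
          · simp [hq, hne]
      | succ r =>
          rw [appendAt_cons_succ]
          unfold rowOf
          rw [List.findIdx_cons, List.findIdx_cons]
          by_cases hq : k ∈ q
          · simp [hq]
          · have hk' : k ∈ Q.flatten := by
              simp only [List.flatten_cons, List.mem_append] at hk
              tauto
            have := ih r hk'
            unfold rowOf at this
            simp [hq, this]

lemma rowOf_appendAt_self {Q : List (List ℕ)} {m : ℕ} {r : ℕ}
    (hlt : ∀ e ∈ Q.flatten, e < m) (hr : r ≤ Q.length) :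
    rowOf (appendAt Q r m) m = r := by
  induction Q generalizing r with
  | nil =>
      have : r = 0 := by simpa using hr
      subst this
      rw [appendAt_nil]
      unfold rowOf
      rw [List.findIdx_cons]
      simp
  | cons q Q ih =>
      cases r with
      | zero =>
          rw [appendAt_cons_zero]
          unfold rowOf
          rw [List.findIdx_cons]
          simp
      | succ r =>
          rw [appendAt_cons_succ]
          unfold rowOf
          rw [List.findIdx_cons]
          have hmq : m ∉ q := fun h => lt_irrefl m (hlt m (by simp [h]))
          have := ih (fun e he => hlt e (by simp [he])) (by simpa using hr)
          unfold rowOf at this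
          simp [hmq, this]

end RSKPaper

namespace RSKPaper

lemma rowOf_foldl (v : List ℕ) : ∀ (P : List (List ℕ)) (Q : List (List ℕ)) (m k : ℕ),
    (∀ e ∈ Q.flatten, e < m) → k ∈ Q.flatten →
    rowOf ((v.foldl rskStep (P, Q, m)).2.1) k = rowOf Q k := by
  induction v with
  | nil => intro P Q m k h1 h2; simp
  | cons a v ih =>
      intro P Q m k hlt hk
      simp only [List.foldl_cons]
      have step : rskStep (P, Q, m) a
          = (insertTableau P a, appendAt Q (diffRow P (insertTableau P a)) m, m + 1) := rfl
      rw [step]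
      have h1 : ∀ e ∈ (appendAt Q (diffRow P (insertTableau P a)) m).flatten, e < m + 1 := by
        intro e he
        rcases mem_flatten_appendAt he with h | rfl
        · exact (hlt e h).trans (by omega)
        · omega
      rw [ih _ _ _ _ h1 (mem_flatten_appendAt_of_mem _ _ hk)]
      exact rowOf_appendAt_ne _ hk (fun h => by have := hlt k hk; omega)

lemma fold_inv (u : List ℕ) (hu : u.Nodup) :
    (∀ R ∈ (u.foldl rskStep ([], [], 1)).1, R.Pairwise (· < ·)) ∧
    (u.foldl rskStep ([], [], 1)).1.flatten.Perm u ∧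
    (u.foldl rskStep ([], [], 1)).2.1.length = (u.foldl rskStep ([], [], 1)).1.length ∧
    (u.foldl rskStep ([], [], 1)).2.2 = u.length + 1 ∧
    ∀ e ∈ (u.foldl rskStep ([], [], 1)).2.1.flatten,
      e < (u.foldl rskStep ([], [], 1)).2.2 := by
  induction u using List.reverseRecOn with
  | nil => simp
  | append_singleton u x ih =>
      have hu' : u.Nodup := hu.of_append_left
      have hxu : x ∉ u := by
        have := List.disjoint_of_nodup_append hu
        exact fun h => this h (by simp)
      obtain ⟨hP, hPperm, hQP, hm, hQlt⟩ := ih hu'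
      rcases hs : u.foldl rskStep ([], [], 1) with ⟨P, st⟩
      rcases st with ⟨Q, m⟩
      rw [hs] at hP hPperm hQP hm hQlt
      dsimp only at hP hPperm hQP hm hQlt
      rw [List.foldl_append, hs]
      have step : List.foldl rskStep (P, Q, m) [x]
          = (insertTableau P x, appendAt Q (diffRow P (insertTableau P x)) m, m + 1) := rfl
      rw [step]
      dsimp only
      have hxF : x ∉ P.flatten := fun h => hxu (hPperm.mem_iff.1 h)
      have hndx : (x :: P.flatten).Nodup := by
        rw [List.nodup_cons]
        exact ⟨hxF, hPperm.nodup_iff.2 hu'⟩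
      refine ⟨insertTableau_rows hP hndx, ?_, ?_, ?_, ?_⟩
      · exact (insertTableau_flatten P x).trans
          ((hPperm.cons x).trans (List.perm_append_comm (l₁ := [x]) (l₂ := u)))
      · rw [appendAt_length]
        rcases insert_spec P x with ⟨h1, h2⟩ | ⟨h1, h2⟩
        · rw [if_neg (by omega), h2, hQP]
        · rw [if_pos (by omega), h2, hQP]
      · simp [hm]
      · intro e he
        rcases mem_flatten_appendAt he with h | rfl
        · exact (hQlt e h).trans (by omega)
        · omega

end RSKPaper

namespace RSKPaper

lemma main_row (u v : List ℕ) (a b : ℕ) (hnd : (u ++ a :: b :: v).Nodup) :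
    (a < b → rowOf (RSKQ (u ++ a :: b :: v)) (u.length + 2)
        ≤ rowOf (RSKQ (u ++ a :: b :: v)) (u.length + 1)) ∧
    (b < a → rowOf (RSKQ (u ++ a :: b :: v)) (u.length + 1)
        < rowOf (RSKQ (u ++ a :: b :: v)) (u.length + 2)) := by
  have hu : u.Nodup := hnd.of_append_left
  have hdisj := List.disjoint_of_nodup_append hnd
  have hau : a ∉ u := fun h => hdisj h (by simp)
  have hbu : b ∉ u := fun h => hdisj h (by simp)
  have habv : (a :: b :: v).Nodup := hnd.of_append_right
  have hab : a ≠ b := by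
    rw [List.nodup_cons] at habv
    exact fun h => habv.1 (by simp [h])
  obtain ⟨hP, hPperm, hQP, hm, hQlt⟩ := fold_inv u hu
  rcases hs : u.foldl rskStep ([], [], 1) with ⟨P, st⟩
  rcases st with ⟨Q, m⟩
  rw [hs] at hP hPperm hQP hm hQlt
  dsimp only at hP hPperm hQP hm hQlt
  unfold RSKQ
  rw [List.foldl_append, hs]
  simp only [List.foldl_cons]
  have e1 : rskStep (P, Q, m) a
      = (insertTableau P a, appendAt Q (diffRow P (insertTableau P a)) m, m + 1) := rfl
  rw [e1]
  set P1 := insertTableau P a with hP1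
  set r1 := diffRow P P1 with hr1
  set Q1 := appendAt Q r1 m with hQ1
  have e2 : rskStep (P1, Q1, m + 1) b
      = (insertTableau P1 b, appendAt Q1 (diffRow P1 (insertTableau P1 b)) (m + 1),
          m + 2) := rfl
  rw [e2]
  set P2 := insertTableau P1 b with hP2
  set r2 := diffRow P1 P2 with hr2
  set Q2 := appendAt Q1 r2 (m + 1) with hQ2
  -- freshness
  have haF : a ∉ P.flatten := fun h => hau (hPperm.mem_iff.1 h)
  have hbF : b ∉ P.flatten := fun h => hbu (hPperm.mem_iff.1 h)
  have hndab : (a :: b :: P.flatten).Nodup := by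
    rw [List.nodup_cons, List.nodup_cons]
    refine ⟨?_, hbF, hPperm.nodup_iff.2 hu⟩
    simp only [List.mem_cons]
    push_neg
    exact ⟨hab, haF⟩
  -- the Schensted comparison
  have hkey := key P a b hP hndab
  rw [← hP1, ← hr1, ← hP2, ← hr2] at hkey
  -- bounds
  have hspec1 := insert_spec P a
  rw [← hP1, ← hr1] at hspec1
  have hspec2 := insert_spec P1 b
  rw [← hP2, ← hr2] at hspec2
  have hr1le : r1 ≤ Q.length := by
    rcases hspec1 with ⟨h1, h2⟩ | ⟨h1, h2⟩ <;> rw [hQP] <;> omega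
  have hQ1len : Q1.length = P1.length := by
    rw [hQ1, appendAt_length]
    rcases hspec1 with ⟨h1, h2⟩ | ⟨h1, h2⟩
    · rw [if_neg (by omega), h2, hQP]
    · rw [if_pos (by omega), h2, hQP]
  have hr2le : r2 ≤ Q1.length := by
    rcases hspec2 with ⟨h1, h2⟩ | ⟨h1, h2⟩ <;> rw [hQ1len] <;> omega
  have hQ1lt : ∀ e ∈ Q1.flatten, e < m + 1 := by
    intro e he
    rcases mem_flatten_appendAt he with h | rfl
    · exact (hQlt e h).trans (by omega)
    · omega
  have hQ2lt : ∀ e ∈ Q2.flatten, e < m + 2 := by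
    intro e he
    rcases mem_flatten_appendAt he with h | rfl
    · exact (hQ1lt e h).trans (by omega)
    · omega
  have hmQ1 : m ∈ Q1.flatten := mem_flatten_appendAt_self Q r1 m
  have hmQ2 : m ∈ Q2.flatten := mem_flatten_appendAt_of_mem _ _ hmQ1
  have hm1Q2 : m + 1 ∈ Q2.flatten := mem_flatten_appendAt_self Q1 r2 (m + 1)
  -- row values
  have hrow1 : rowOf Q2 m = r1 := by
    rw [hQ2, rowOf_appendAt_ne _ hmQ1 (by omega), hQ1,
      rowOf_appendAt_self hQlt hr1le]
  have hrow2 : rowOf Q2 (m + 1) = r2 := by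
    rw [hQ2, rowOf_appendAt_self hQ1lt hr2le]
  have hfin1 := rowOf_foldl v P2 Q2 (m + 2) m hQ2lt hmQ2
  have hfin2 := rowOf_foldl v P2 Q2 (m + 2) (m + 1) hQ2lt hm1Q2
  have hlab1 : u.length + 1 = m := hm.symm
  have hlab2 : u.length + 2 = m + 1 := by omega
  rw [hlab1, hlab2, hfin1, hfin2, hrow1, hrow2]
  exact hkey

end RSKPaper

namespace RSKPaper

lemma exists_decomp (l : List ℕ) (i : ℕ) (h : i + 2 ≤ l.length) :
    ∃ u a b v, l = u ++ a :: b :: v ∧ u.length = i := by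
  have h1 : (l.drop i).length = l.length - i := by simp
  rcases hd : l.drop i with _ | ⟨a, t⟩
  · rw [hd] at h1; simp at h1; omega
  rcases ht : t with _ | ⟨b, v⟩
  · rw [hd, ht] at h1; simp at h1; omega
  subst ht
  refine ⟨l.take i, a, b, v, ?_, ?_⟩
  · conv_lhs => rw [← List.take_append_drop i l]
    rw [hd]
  · simp; omega

end RSKPaper

open RSKPaper in
/-- for even `n` (`n ≥ 1`) there is no `w ∈ S_n` with
`Q(w) = Q(w^r)`. -/
theorem stmt_13 (n : ℕ) (hn : Even n) (hn1 : 1 ≤ n) :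
    ¬ ∃ w : List ℕ, IsPerm n w ∧ RSKQ w = RSKQ w.reverse := by
  rintro ⟨w, hperm, hQ⟩
  obtain ⟨k, hk⟩ := hn
  have hk1 : 1 ≤ k := by omega
  have hlen : w.length = n := by simpa using hperm.length_eq
  have hnd : w.Nodup := hperm.nodup_iff.2 (List.nodup_range' (h := Nat.one_pos))
  obtain ⟨u, a, b, v, hw, hulen⟩ := exists_decomp w (k - 1) (by omega)
  have hndw : (u ++ a :: b :: v).Nodup := hw ▸ hnd
  have hvlen : v.length = k - 1 := by
    have h := hlen
    rw [hw] at h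
    simp at h
    omega
  have hwrev : w.reverse = v.reverse ++ b :: a :: u.reverse := by
    rw [hw]
    simp
  have hndrev : (v.reverse ++ b :: a :: u.reverse).Nodup := by
    rw [← hwrev]
    exact List.nodup_reverse.2 hnd
  have h1 := main_row u v a b hndw
  have h2 := main_row v.reverse u.reverse b a hndrev
  rw [← hw] at h1
  rw [← hwrev, ← hQ] at h2
  rw [hulen] at h1
  rw [List.length_reverse, hvlen] at h2
  have hab : a ≠ b := by
    have := hndw.of_append_right
    rw [List.nodup_cons] at this
    exact fun h => this.1 (by simp [h])
  rcases lt_trichotomy a b with h | h | h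
  · have := h1.1 h
    have := h2.2 h
    omega
  · exact hab h
  · have := h1.2 h
    have := h2.1 h
    omega
end

section
/- For odd n and λ = ((n+1)/2, 1^{(n−1)/2}), a standard Young tableau P of shape λ satisfies ε(P)^T = P (where ε is evacuation and T is transpose) if and only if for every i ∈ [n] with i > 1, the presence of i in the first row of P implies that n−i+2 is in the first column of P. -/
namespace Aux
open RSKPaper List

/-- The hook tableau with corner `r0`, rest of first row `A`, rest of first column `B`. -/
def H (r0 : ℕ) (A B : List ℕ) : List (List ℕ) :=
  (r0 :: A) :: B.map (fun b => [b])

lemma set_append_len {α : Type*} (u : List α) (h : α) (w : List α) (x : α) :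
    (u ++ h :: w).set u.length x = u ++ x :: w := by
  induction u with
  | nil => simp
  | cons a u ih => simp [List.set, ih]

lemma getD_append_len {α : Type*} (l1 l2 : List (List α)) :
    (l1 ++ l2).getD l1.length [] = l2.getD 0 [] := by
  induction l1 with
  | nil => simp
  | cons a l ih => simpa using ih

lemma getCell?_singletons_succ (L : List (List ℕ)) (hL : ∀ r ∈ L, r.length ≤ 1)
    (i j : ℕ) (hj : 1 ≤ j) : getCell? L i j = none := by
  unfold getCell?
  rcases h : L[i]? with _ | r
  · simp [List.getD_eq_getElem?_getD, h, List.getElem?_eq_none_iff]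
  · have : r ∈ L := List.mem_of_getElem? h
    simp [List.getD_eq_getElem?_getD, h, List.getElem?_eq_none_iff]
    exact le_trans (hL r this) hj

lemma slide_right : ∀ (v : List ℕ) (fuel : ℕ) (u : List ℕ) (h : ℕ) (rest : List (List ℕ)),
    1 ≤ u.length → (∀ r ∈ rest, r.length ≤ 1) → v.length + 1 ≤ fuel →
    slide fuel ((u ++ h :: v) :: rest) 0 u.length = (u ++ v) :: rest := by
  intro v
  induction v with
  | nil =>
    intro fuel u h rest hu hrest hfuel
    obtain ⟨f, rfl⟩ : ∃ f, fuel = f + 1 := ⟨fuel - 1, by omega⟩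
    rw [slide]
    have h1 : getCell? ((u ++ [h]) :: rest) 0 (u.length + 1) = none := by
      simp [getCell?, List.getElem?_eq_none_iff]
    have h2 : getCell? ((u ++ [h]) :: rest) 1 u.length = none := by
      cases rest with
      | nil => simp [getCell?, List.getElem?_eq_none_iff]
      | cons r rs =>
        have : r.length ≤ 1 := hrest r (by simp)
        simp [getCell?, List.getElem?_eq_none_iff]; omega
    rw [h1, h2]
    dsimp only
    unfold removeCell
    have ht : ((u ++ [h]) :: rest).getD 0 [] = u ++ [h] := rfl
    rw [ht, List.take_left]
    have : u.isEmpty = false := by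
      cases u with
      | nil => simp at hu
      | cons a l => rfl
    simp [this]
  | cons x v ih =>
    intro fuel u h rest hu hrest hfuel
    obtain ⟨f, rfl⟩ : ∃ f, fuel = f + 1 := ⟨fuel - 1, by omega⟩
    rw [slide]
    have h1 : getCell? ((u ++ h :: x :: v) :: rest) 0 (u.length + 1) = some x := by
      unfold getCell?
      have : (u ++ h :: x :: v)[u.length + 1]? = some x := by
        rw [List.getElem?_append_right (by omega)]
        simp [show u.length + 1 - u.length = 1 by omega]
      simpa [List.getD_cons_zero] using this
    have h2 : getCell? ((u ++ h :: x :: v) :: rest) 1 u.length = none := by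
      cases rest with
      | nil => simp [getCell?, List.getElem?_eq_none_iff]
      | cons r rs =>
        have : r.length ≤ 1 := hrest r (by simp)
        simp [getCell?, List.getElem?_eq_none_iff]; omega
    rw [h1, h2]
    dsimp only
    have hset : setCell ((u ++ h :: x :: v) :: rest) 0 u.length x
        = ((u ++ [x]) ++ x :: v) :: rest := by
      unfold setCell
      simp [set_append_len]
    rw [hset]
    have := ih f (u ++ [x]) x rest (by simp) hrest (by simp only [List.length_cons] at hfuel; omega)
    simp only [List.length_append, List.length_cons, List.length_nil] at this ⊢
    simpa using this

lemma slide_down : ∀ (B' : List ℕ) (fuel : ℕ) (pre : List ℕ) (h : ℕ) (row0 : List ℕ),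
    B'.length + 1 ≤ fuel →
    slide fuel (row0 :: (pre ++ h :: B').map (fun x => [x])) (pre.length + 1) 0
      = row0 :: (pre ++ B').map (fun x => [x]) := by
  intro B'
  induction B' with
  | nil =>
    intro fuel pre h row0 hfuel
    obtain ⟨f, rfl⟩ : ∃ f, fuel = f + 1 := ⟨fuel - 1, by omega⟩
    rw [slide]
    have hrow : (row0 :: (pre ++ [h]).map (fun x => [x])).getD (pre.length + 1) []
        = [h] := by
      simp only [List.getD_cons_succ, List.map_append]
      have := getD_append_len (pre.map (fun x => [x])) ([h] :: [])
      simpa using this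
    have h1 : getCell? (row0 :: (pre ++ [h]).map (fun x => [x])) (pre.length + 1) 1 = none := by
      unfold getCell?; rw [hrow]; rfl
    have h2 : getCell? (row0 :: (pre ++ [h]).map (fun x => [x])) (pre.length + 2) 0 = none := by
      unfold getCell?
      simp only [List.getD_cons_succ, List.map_append]
      have hlen : ((pre.map (fun x => [x])) ++ [[h]]).length = pre.length + 1 := by simp
      simp [List.getD_eq_getElem?_getD, List.getElem?_eq_none (by simp : (pre.map (fun x => [x]) ++ [[h]]).length ≤ pre.length + 1)]
    rw [h1, h2]
    dsimp only
    unfold removeCell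
    rw [hrow]
    simp [List.take_succ_cons, List.map_append]
  | cons b B'' ih =>
    intro fuel pre h row0 hfuel
    obtain ⟨f, rfl⟩ : ∃ f, fuel = f + 1 := ⟨fuel - 1, by omega⟩
    rw [slide]
    have hrow : (row0 :: (pre ++ h :: b :: B'').map (fun x => [x])).getD (pre.length + 1) []
        = [h] := by
      simp only [List.getD_cons_succ, List.map_append]
      have := getD_append_len (pre.map (fun x => [x])) ([h] :: (b :: B'').map (fun x => [x]))
      simpa using this
    have hrow2 : (row0 :: (pre ++ h :: b :: B'').map (fun x => [x])).getD (pre.length + 2) []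
        = [b] := by
      simp only [List.getD_cons_succ, List.map_append]
      have := getD_append_len ((pre ++ [h]).map (fun x => [x])) ((b :: B'').map (fun x => [x]))
      simp only [List.map_append] at this
      simpa [List.append_assoc] using this
    have h1 : getCell? (row0 :: (pre ++ h :: b :: B'').map (fun x => [x])) (pre.length + 1) 1 = none := by
      unfold getCell?; rw [hrow]; rfl
    have h2 : getCell? (row0 :: (pre ++ h :: b :: B'').map (fun x => [x])) (pre.length + 2) 0 = some b := by
      unfold getCell?; rw [hrow2]; rfl
    rw [h1, h2]
    dsimp only
    have hset : setCell (row0 :: (pre ++ h :: b :: B'').map (fun x => [x])) (pre.length + 1) 0 b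
        = row0 :: ((pre ++ [b]) ++ b :: B'').map (fun x => [x]) := by
      unfold setCell
      rw [hrow]
      have : (row0 :: (pre ++ h :: b :: B'').map (fun x => [x])).set (pre.length + 1) [b]
          = row0 :: ((pre.map (fun x => [x]) ++ [b] :: (b :: B'').map (fun x => [x]))) := by
        simp only [List.map_append, List.map_cons, List.set_cons_succ]
        congr 1
        have : pre.length = (pre.map (fun x : ℕ => [x])).length := by simp
        rw [this, set_append_len]
      simpa [List.append_assoc] using this
    rw [hset]
    have := ih f (pre ++ [b]) b row0 (by simp at hfuel ⊢; omega)
    simp only [List.length_append, List.length_cons, List.length_nil] at this ⊢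
    simpa [List.append_assoc] using this

lemma size_H (r0 : ℕ) (A B : List ℕ) : size (H r0 A B) = A.length + B.length + 1 := by
  have hb : ∀ (C : List ℕ), ((C.map (fun b => [b])).map List.length).sum = C.length := by
    intro C; induction C with
    | nil => simp
    | cons c C ih => simp [Function.comp] at ih ⊢; omega
  unfold size shape H
  simp only [List.map_cons, List.sum_cons, List.length_cons, hb]
  omega

lemma delta_hook_row (r0 a1 : ℕ) (A' B : List ℕ) (h : ∀ b ∈ B, a1 < b) :
    delta (H r0 (a1 :: A') B) = H a1 A' B := by
  unfold delta
  rw [size_H]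
  simp only [List.length_cons]
  have h1 : getCell? (H r0 (a1 :: A') B) 0 1 = some a1 := rfl
  have h2 : getCell? (H r0 (a1 :: A') B) 1 0 = B[0]? := by
    cases B with
    | nil => rfl
    | cons b B' => rfl
  have hrest : ∀ r ∈ B.map (fun b => [b]), r.length ≤ 1 := by
    intro r hr; rcases List.mem_map.1 hr with ⟨b, _, rfl⟩; simp
  have key : slide (A'.length + B.length + 1) (setCell (H r0 (a1 :: A') B) 0 0 a1) 0 1
      = H a1 A' B := by
    have hset : setCell (H r0 (a1 :: A') B) 0 0 a1
        = (([a1] ++ a1 :: A') :: B.map (fun b => [b])) := by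
      simp [setCell, H]
    rw [hset]
    have := slide_right A' (A'.length + B.length + 1) [a1] a1 (B.map (fun b => [b]))
      (by simp) hrest (by simp)
    simpa [H] using this
  rw [show A'.length + 1 + B.length + 1 = (A'.length + B.length + 1) + 1 by omega, slide]
  rw [h1, h2]
  cases B with
  | nil => exact key
  | cons b B' =>
    have hb : a1 < b := h b (by simp)
    simp only [List.getElem?_cons_zero]
    try dsimp only
    rw [if_pos hb]
    exact key

lemma delta_hook_col (r0 b1 : ℕ) (A B' : List ℕ) (h : ∀ a ∈ A, b1 < a) :
    delta (H r0 A (b1 :: B')) = H b1 A B' := by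
  unfold delta
  rw [size_H]
  simp only [List.length_cons]
  have h2 : getCell? (H r0 A (b1 :: B')) 1 0 = some b1 := rfl
  have key : slide (A.length + B'.length + 1) (setCell (H r0 A (b1 :: B')) 0 0 b1) 1 0
      = H b1 A B' := by
    have hset : setCell (H r0 A (b1 :: B')) 0 0 b1
        = ((b1 :: A) :: (([] ++ b1 :: B').map (fun x => [x]))) := by
      simp [setCell, H]
    rw [hset]
    have := slide_down B' (A.length + B'.length + 1) [] b1 (b1 :: A) (by omega)
    simpa [H] using this
  rw [show A.length + (B'.length + 1) + 1 = (A.length + B'.length + 1) + 1 by omega, slide]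
  rw [h2]
  cases A with
  | nil =>
    have h1 : getCell? (H r0 [] (b1 :: B')) 0 1 = none := rfl
    rw [h1]
    exact key
  | cons a1 A'' =>
    have h1 : getCell? (H r0 (a1 :: A'') (b1 :: B')) 0 1 = some a1 := rfl
    rw [h1]
    try dsimp only
    rw [if_neg (by have := h a1 (by simp); omega)]
    exact key

lemma hasCell_nil (i j : ℕ) : hasCell [] i j = false := by
  simp [hasCell]

lemma hasCell_H_zero (r0 : ℕ) (A B : List ℕ) (j : ℕ) :
    hasCell (H r0 A B) 0 j = decide (j < A.length + 1) := by
  simp [hasCell, H]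

lemma hasCell_H_succ (r0 : ℕ) (A B : List ℕ) (i : ℕ) :
    hasCell (H r0 A B) (i + 1) 0 = decide (i < B.length) := by
  simp only [hasCell, H, List.getD_cons_succ]
  rcases lt_or_ge i B.length with hi | hi
  · simp only [List.getD_eq_getElem?_getD]
    simp [List.getElem?_map, List.getElem?_eq_getElem hi, hi]
  · simp only [List.getD_eq_getElem?_getD]
    simp [List.getElem?_eq_none (by simpa using hi : (B.map (fun b => [b])).length ≤ i)]
    omega

lemma length_getD_setCell (U : List (List ℕ)) (a b x i : ℕ) :
    ((setCell U a b x).getD i []).length = (U.getD i []).length := by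
  unfold setCell
  by_cases hia : i = a
  · subst hia
    by_cases hl : i < U.length
    · rw [List.getD_eq_getElem?_getD, List.getElem?_set_self (by simpa using hl),
        List.getD_eq_getElem?_getD]
      simp [List.getElem?_eq_getElem hl]
    · rw [List.set_eq_of_length_le (by omega)]
  · rw [List.getD_eq_getElem?_getD, List.getElem?_set_ne (fun hh => hia hh.symm),
      ← List.getD_eq_getElem?_getD]

lemma length_getD_removeCell (U : List (List ℕ)) (a b i : ℕ) :
    ((removeCell U a b).getD i []).length ≤ (U.getD i []).length := by
  unfold removeCell
  by_cases he : ((U.getD a []).take b).isEmpty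
  · rw [if_pos he]
    rcases lt_or_ge i a with hi | hi
    · rw [List.getD_eq_getElem?_getD, List.getElem?_take_of_lt hi, ← List.getD_eq_getElem?_getD]
    · rw [List.getD_eq_getElem?_getD]
      rcases lt_or_ge i (U.take a).length with h2 | h2
      · simp at h2; omega
      · simp [List.getElem?_eq_none h2]
  · rw [if_neg he]
    by_cases hia : i = a
    · subst hia
      by_cases hl : i < U.length
      · rw [List.getD_eq_getElem?_getD, List.getElem?_set_self (by simpa using hl)]
        simp
      · rw [List.set_eq_of_length_le (by omega)]
    · rw [List.getD_eq_getElem?_getD, List.getElem?_set_ne (fun hh => hia hh.symm),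
        ← List.getD_eq_getElem?_getD]

lemma hasCell_slide : ∀ (fuel : ℕ) (U : List (List ℕ)) (a b i j : ℕ),
    hasCell (slide fuel U a b) i j = true → hasCell U i j = true := by
  intro fuel
  induction fuel with
  | zero => intro U a b i j h; exact h
  | succ f ih =>
    intro U a b i j h
    rw [slide] at h
    rcases h1 : getCell? U a (b+1) with _ | x <;> rcases h2 : getCell? U (a+1) b with _ | y <;>
      rw [h1, h2] at h
    · simp only [hasCell] at h ⊢
      have := length_getD_removeCell U a b i
      simp only [decide_eq_true_eq] at h ⊢
      omega
    · have h' := ih _ _ _ _ _ h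
      simp only [hasCell, decide_eq_true_eq] at h' ⊢
      rwa [length_getD_setCell] at h'
    · have h' := ih _ _ _ _ _ h
      simp only [hasCell, decide_eq_true_eq] at h' ⊢
      rwa [length_getD_setCell] at h'
    · dsimp only at h
      split at h <;>
      · have h' := ih _ _ _ _ _ h
        simp only [hasCell, decide_eq_true_eq] at h' ⊢
        rwa [length_getD_setCell] at h'

lemma hasCell_delta (U : List (List ℕ)) (i j : ℕ) :
    hasCell (delta U) i j = true → hasCell U i j = true :=
  hasCell_slide _ U 0 0 i j

lemma hasCell_delta_iter (U : List (List ℕ)) (t i j : ℕ) :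
    hasCell (delta^[t] U) i j = true → hasCell U i j = true := by
  induction t generalizing U with
  | zero => exact fun h => h
  | succ s ih =>
    intro h
    rw [Function.iterate_succ_apply] at h
    exact hasCell_delta U i j (ih (delta U) h)
lemma evacEntry_delta (T : List (List ℕ)) (i j : ℕ)
    (hΔ : hasCell (delta T) i j = true) (hsize : size T = size (delta T) + 1) :
    evacEntry T i j = evacEntry (delta T) i j := by
  unfold evacEntry
  rw [hsize, List.range_succ_eq_map]
  rw [List.countP_cons_of_pos (by simpa using hΔ)]
  rw [List.countP_map]
  have hcomp : ((fun t => hasCell (delta^[t + 1] T) i j) ∘ Nat.succ)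
      = (fun t => hasCell (delta^[t + 1] (delta T)) i j) := by
    funext t
    simp [Function.comp, Function.iterate_succ_apply]
  rw [hcomp]
  generalize (List.range (size (delta T))).countP
    (fun t => hasCell (delta^[t + 1] (delta T)) i j) = cnt
  omega

lemma evacEntry_vacated (T : List (List ℕ)) (i j : ℕ)
    (hΔ : hasCell (delta T) i j = false) :
    evacEntry T i j = size T := by
  unfold evacEntry
  have hz : (List.range (size T)).countP (fun t => hasCell (delta^[t + 1] T) i j) = 0 := by
    apply List.countP_eq_zero.2
    intro t _
    simp only [Bool.not_eq_true]
    cases h : hasCell (delta^[t + 1] T) i j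
    · rfl
    · exfalso
      rw [Function.iterate_succ_apply] at h
      have := hasCell_delta_iter (delta T) t i j h
      rw [hΔ] at this
      exact Bool.noConfusion this
  rw [hz]
  omega

lemma mapIdx_fun {β γ : Type*} : ∀ (l : List β) (e : ℕ → γ),
    l.mapIdx (fun k _ => e k) = (List.range l.length).map e := by
  intro l
  induction l with
  | nil => intro e; simp
  | cons a l ih =>
    intro e
    rw [List.mapIdx_cons, List.length_cons, List.range_succ_eq_map]
    simp only [List.map_cons, List.map_map]
    rw [ih (fun k => e (k + 1))]
    congr 1

lemma mapIdx_singletons : ∀ (C : List ℕ) (E : ℕ → ℕ → ℕ),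
    (C.map (fun b => [b])).mapIdx (fun i r => r.mapIdx (fun j _ => E i j))
      = (List.range C.length).map (fun i => [E i 0]) := by
  intro C
  induction C with
  | nil => intro E; simp
  | cons c C ih =>
    intro E
    rw [List.map_cons, List.mapIdx_cons, List.length_cons, List.range_succ_eq_map]
    simp only [List.map_cons, List.map_map]
    rw [ih (fun i => E (i + 1))]
    congr 1
    all_goals simp [List.mapIdx_cons]

lemma evacuation_H (r0 : ℕ) (A B : List ℕ) :
    evacuation (H r0 A B) =
      (List.range (A.length + 1)).map (fun j => evacEntry (H r0 A B) 0 j)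
        :: (List.range B.length).map (fun i => [evacEntry (H r0 A B) (i + 1) 0]) := by
  conv_lhs => rw [evacuation, H]
  rw [List.mapIdx_cons, mapIdx_singletons]
  congr 1
  rw [mapIdx_fun (r0 :: A) (fun j => evacEntry ((r0 :: A) :: B.map (fun b => [b])) 0 j)]
  simp [H]

lemma delta_single (r0 : ℕ) : delta [[r0]] = [] := by
  rfl
lemma evac_hook : ∀ (N : ℕ) (A B : List ℕ) (r0 c : ℕ),
    A.length + B.length = N →
    A.Pairwise (· < ·) → B.Pairwise (· < ·) → A.Disjoint B →
    (∀ x, (x ∈ A ∨ x ∈ B) ↔ (c + 1 ≤ x ∧ x < c + 1 + N)) →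
    evacuation (H r0 A B) =
      H 1 ((A.map (fun a => N + 1 + c + 1 - a)).reverse)
        ((B.map (fun a => N + 1 + c + 1 - a)).reverse) := by
  intro N
  induction N with
  | zero =>
    intro A B r0 c hlen _ _ _ _
    have hA : A = [] := List.eq_nil_of_length_eq_zero (by omega)
    have hB : B = [] := List.eq_nil_of_length_eq_zero (by omega)
    subst hA; subst hB
    rw [evacuation_H]
    have he : evacEntry (H r0 [] []) 0 0 = 1 := by
      unfold evacEntry
      rw [size_H]
      have hdel : delta (H r0 [] []) = [] := delta_single r0
      simp [List.range_succ, List.countP_cons, Function.iterate_succ_apply, hdel, hasCell_nil]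
    simp only [H, List.map_nil] at he ⊢
    simp [List.range_succ, he]
  | succ M ih =>
    intro A B r0 c hlen hsA hsB hdisj hmem
    have hmemA : ∀ x ∈ A, c + 1 ≤ x ∧ x < c + 2 + M := by
      intro x hx; have := (hmem x).1 (Or.inl hx); omega
    have hmemB : ∀ x ∈ B, c + 1 ≤ x ∧ x < c + 2 + M := by
      intro x hx; have := (hmem x).1 (Or.inr hx); omega
    have hc1 : c + 1 ∈ A ∨ c + 1 ∈ B := (hmem (c + 1)).2 ⟨le_refl _, by omega⟩
    set g : ℕ → ℕ := fun a => M + 1 + 1 + c + 1 - a with hg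
    rcases hc1 with hA1 | hB1
    · -- the next value is in the first row
      cases A with
      | nil => simp at hA1
      | cons a1 A' =>
        obtain ⟨hsA1, hsA'⟩ := List.pairwise_cons.mp hsA
        have ha1 : a1 = c + 1 := by
          rcases List.mem_cons.mp hA1 with h | h
          · omega
          · have h1 := hsA1 _ h
            have h2 := (hmemA a1 (by simp)).1
            omega
        have hbgt : ∀ b ∈ B, a1 < b := by
          intro b hb
          have h1 := (hmemB b hb).1
          have h2 : b ≠ c + 1 := fun h => hdisj hA1 (h ▸ hb)
          omega
        have hdel : delta (H r0 (a1 :: A') B) = H a1 A' B := delta_hook_row r0 a1 A' B hbgt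
        have hmem' : ∀ x, (x ∈ A' ∨ x ∈ B) ↔ ((c + 1) + 1 ≤ x ∧ x < (c + 1) + 1 + M) := by
          intro x
          constructor
          · intro hx
            rcases hx with hx | hx
            · have h1 := hsA1 _ hx
              have h2 := hmemA x (by simp [hx])
              omega
            · have h1 := hmemB x hx
              have h2 : x ≠ c + 1 := fun h => hdisj hA1 (h ▸ hx)
              omega
          · intro hx
            have := (hmem x).2 ⟨by omega, by omega⟩
            rcases this with h | h
            · rcases List.mem_cons.mp h with h | h
              · omega
              · exact Or.inl h
            · exact Or.inr h
        have hdisj' : A'.Disjoint B := fun x hx => hdisj (List.mem_cons_of_mem _ hx)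
        have hlen' : A'.length + B.length = M := by simp at hlen; omega
        have ihh := ih A' B a1 (c + 1) hlen' hsA' hsB hdisj' hmem'
        have hfun : (fun a : ℕ => M + 1 + (c + 1) + 1 - a) = g := by
          funext a; simp only [hg]; omega
        rw [hfun, evacuation_H] at ihh
        obtain ⟨hrow, hcol⟩ := List.cons.inj ihh
        have hsz : size (H r0 (a1 :: A') B) = size (delta (H r0 (a1 :: A') B)) + 1 := by
          rw [hdel, size_H, size_H]; simp; omega
        rw [evacuation_H]
        have hN : size (H r0 (a1 :: A') B) = M + 2 := by rw [size_H]; simp at hlen ⊢; omega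
        -- row computation
        have hrowc : (List.range (A'.length + 1)).map
            (fun j => evacEntry (H r0 (a1 :: A') B) 0 j)
            = (List.range (A'.length + 1)).map (fun j => evacEntry (H a1 A' B) 0 j) := by
          apply List.map_congr_left
          intro j hj
          have hjlt : j < A'.length + 1 := List.mem_range.mp hj
          have hc : hasCell (delta (H r0 (a1 :: A') B)) 0 j = true := by
            rw [hdel, hasCell_H_zero]; simpa using hjlt
          rw [evacEntry_delta _ _ _ hc hsz, hdel]
        have hlast : evacEntry (H r0 (a1 :: A') B) 0 (A'.length + 1) = M + 2 := by
          rw [evacEntry_vacated, hN]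
          rw [hdel, hasCell_H_zero]
          simp
        have hga1 : g a1 = M + 2 := by simp only [hg]; omega
        congr 1
        · -- first row
          rw [show (a1 :: A').length + 1 = (A'.length + 1) + 1 by simp, List.range_succ,
            List.map_append, hrowc, hrow]
          simp only [List.map_cons, List.reverse_cons, List.map_append]
          simp [hlast, hga1]
        · -- first column
          have hcolc : (List.range B.length).map
              (fun i => [evacEntry (H r0 (a1 :: A') B) (i + 1) 0])
              = (List.range B.length).map (fun i => [evacEntry (H a1 A' B) (i + 1) 0]) := by
            apply List.map_congr_left
            intro i hi
            have hilt : i < B.length := List.mem_range.mp hi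
            have hc : hasCell (delta (H r0 (a1 :: A') B)) (i + 1) 0 = true := by
              rw [hdel, hasCell_H_succ]; simpa using hilt
            rw [evacEntry_delta _ _ _ hc hsz, hdel]
          rw [hcolc, hcol]
    · -- the next value is in the first column
      cases B with
      | nil => simp at hB1
      | cons b1 B' =>
        obtain ⟨hsB1, hsB'⟩ := List.pairwise_cons.mp hsB
        have hb1 : b1 = c + 1 := by
          rcases List.mem_cons.mp hB1 with h | h
          · omega
          · have h1 := hsB1 _ h
            have h2 := (hmemB b1 (by simp)).1
            omega
        have hagt : ∀ a ∈ A, b1 < a := by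
          intro a ha
          have h1 := (hmemA a ha).1
          have h2 : a ≠ c + 1 := fun h => hdisj (h ▸ ha) hB1
          omega
        have hdel : delta (H r0 A (b1 :: B')) = H b1 A B' := delta_hook_col r0 b1 A B' hagt
        have hmem' : ∀ x, (x ∈ A ∨ x ∈ B') ↔ ((c + 1) + 1 ≤ x ∧ x < (c + 1) + 1 + M) := by
          intro x
          constructor
          · intro hx
            rcases hx with hx | hx
            · have h1 := hmemA x hx
              have h2 : x ≠ c + 1 := fun h => hdisj (h ▸ hx) hB1
              omega
            · have h1 := hsB1 _ hx
              have h2 := hmemB x (by simp [hx])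
              omega
          · intro hx
            have := (hmem x).2 ⟨by omega, by omega⟩
            rcases this with h | h
            · exact Or.inl h
            · rcases List.mem_cons.mp h with h | h
              · omega
              · exact Or.inr h
        have hdisj' : A.Disjoint B' := fun x hx hx' => hdisj hx (List.mem_cons_of_mem _ hx')
        have hlen' : A.length + B'.length = M := by simp at hlen; omega
        have ihh := ih A B' b1 (c + 1) hlen' hsA hsB' hdisj' hmem'
        have hfun : (fun a : ℕ => M + 1 + (c + 1) + 1 - a) = g := by
          funext a; simp only [hg]; omega
        rw [hfun, evacuation_H] at ihh
        obtain ⟨hrow, hcol⟩ := List.cons.inj ihh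
        have hsz : size (H r0 A (b1 :: B')) = size (delta (H r0 A (b1 :: B'))) + 1 := by
          rw [hdel, size_H, size_H]; simp; omega
        rw [evacuation_H]
        have hN : size (H r0 A (b1 :: B')) = M + 2 := by rw [size_H]; simp at hlen ⊢; omega
        have hgb1 : g b1 = M + 2 := by simp only [hg]; omega
        congr 1
        · -- first row
          have hrowc : (List.range (A.length + 1)).map
              (fun j => evacEntry (H r0 A (b1 :: B')) 0 j)
              = (List.range (A.length + 1)).map (fun j => evacEntry (H b1 A B') 0 j) := by
            apply List.map_congr_left
            intro j hj
            have hjlt : j < A.length + 1 := List.mem_range.mp hj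
            have hc : hasCell (delta (H r0 A (b1 :: B'))) 0 j = true := by
              rw [hdel, hasCell_H_zero]; simpa using hjlt
            rw [evacEntry_delta _ _ _ hc hsz, hdel]
          rw [hrowc, hrow]
        · -- first column
          have hcolc : (List.range B'.length).map
              (fun i => [evacEntry (H r0 A (b1 :: B')) (i + 1) 0])
              = (List.range B'.length).map (fun i => [evacEntry (H b1 A B') (i + 1) 0]) := by
            apply List.map_congr_left
            intro i hi
            have hilt : i < B'.length := List.mem_range.mp hi
            have hc : hasCell (delta (H r0 A (b1 :: B'))) (i + 1) 0 = true := by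
              rw [hdel, hasCell_H_succ]; simpa using hilt
            rw [evacEntry_delta _ _ _ hc hsz, hdel]
          have hlastc : evacEntry (H r0 A (b1 :: B')) (B'.length + 1) 0 = M + 2 := by
            rw [evacEntry_vacated, hN]
            rw [hdel, hasCell_H_succ]
            simp
          rw [show (b1 :: B').length = B'.length + 1 by simp, List.range_succ,
            List.map_append, hcolc, hcol]
          simp only [List.map_cons, List.reverse_cons, List.map_append]
          simp [hlastc, hgb1]
lemma filterMap_get0 (Y : List ℕ) :
    (Y.map (fun b => [b])).filterMap (fun r => r[0]?) = Y := by
  rw [List.filterMap_map]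
  have h : ((fun r : List ℕ => r[0]?) ∘ fun b => [b]) = some := by funext b; rfl
  rw [h, List.filterMap_some]

lemma filterMap_getsucc (Y : List ℕ) (j : ℕ) :
    (Y.map (fun b => [b])).filterMap (fun r => r[j + 1]?) = [] := by
  rw [List.filterMap_map]
  have h : ((fun r : List ℕ => r[j + 1]?) ∘ fun b => [b]) = fun _ => none := by
    funext b; rfl
  rw [h]
  induction Y with
  | nil => rfl
  | cons y Y ih => simpa [List.filterMap_cons] using ih

lemma filterMap_head_singletons (Y : List ℕ) :
    (Y.map (fun b => [b])).filterMap (fun r => r.head?) = Y := by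
  rw [List.filterMap_map]
  have h : ((fun r : List ℕ => r.head?) ∘ fun b => [b]) = some := by funext b; rfl
  rw [h, List.filterMap_some]

lemma flatten_singletons (Y : List ℕ) : (Y.map (fun b => [b])).flatten = Y := by
  induction Y with
  | nil => simp
  | cons y Y ih => simp [ih]

lemma range_map_get (X : List ℕ) :
    (List.range X.length).map (fun j => X[j]?.toList) = X.map (fun x => [x]) := by
  induction X with
  | nil => simp
  | cons x X ih =>
    rw [List.length_cons, List.range_succ_eq_map]
    simp only [List.map_cons, List.map_map]
    have hc : ((fun j => (x :: X)[j]?.toList) ∘ Nat.succ)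
        = (fun j => X[j]?.toList) := by
      funext j; rfl
    rw [hc, ih]
    rfl

lemma transposeT_H (r0 : ℕ) (X Y : List ℕ) : transposeT (H r0 X Y) = H r0 Y X := by
  unfold transposeT H
  simp only [List.headD_cons, List.length_cons]
  rw [List.range_succ_eq_map]
  simp only [List.map_cons, List.map_map]
  congr 1
  · rw [List.filterMap_cons]
    have h0 : (r0 :: X)[0]? = some r0 := rfl
    rw [h0, filterMap_get0]
  · have hcong : ∀ j,
        ((r0 :: X) :: Y.map (fun b => [b])).filterMap (fun row => row[j + 1]?)
          = X[j]?.toList := by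
      intro j
      rw [List.filterMap_cons, show (r0 :: X)[j + 1]? = X[j]? from rfl]
      cases h : X[j]? with
      | none => rw [filterMap_getsucc]; rfl
      | some x => rw [filterMap_getsucc]; rfl
    calc (List.range X.length).map
          ((fun j => ((r0 :: X) :: Y.map (fun b => [b])).filterMap (fun row => row[j]?))
            ∘ Nat.succ)
        = (List.range X.length).map (fun j => X[j]?.toList) := by
          apply List.map_congr_left
          intro j _
          exact hcong j
      _ = X.map (fun x => [x]) := range_map_get X

lemma singletons_of_shape : ∀ (L : List (List ℕ)) (k : ℕ),
    L.map List.length = List.replicate k 1 → ∃ B : List ℕ, L = B.map (fun b => [b]) := by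
  intro L
  induction L with
  | nil => exact fun k _ => ⟨[], rfl⟩
  | cons r L ih =>
    intro k h
    cases k with
    | zero => simp at h
    | succ k' =>
      rw [List.replicate_succ] at h
      obtain ⟨h1, h2⟩ := List.cons.inj h
      obtain ⟨x, rfl⟩ := List.length_eq_one_iff.mp h1
      obtain ⟨B', rfl⟩ := ih k' h2
      exact ⟨x :: B', rfl⟩

lemma H_inj (r0 : ℕ) (X Y A B : List ℕ) :
    H r0 X Y = H r0 A B ↔ X = A ∧ Y = B := by
  constructor
  · intro h
    unfold H at h
    obtain ⟨h1, h2⟩ := List.cons.inj h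
    refine ⟨by simpa using h1, ?_⟩
    have : Function.Injective (fun b : ℕ => [b]) := fun a b hab => by simpa using hab
    exact List.map_injective_iff.mpr this h2
  · rintro ⟨rfl, rfl⟩; rfl

end Aux


open RSKPaper in
/-- for odd `n` and the symmetric hook shape, `ε(P)^T = P` iff
for every `i > 1`, `i` in the first row of `P` implies `n - i + 2` is in the
first column of `P`. -/
theorem stmt_14 (n : ℕ) (hn : Odd n) (T : List (List ℕ)) (hT : IsSYT T)
    (hs : shape T = hookShape n) :
    transposeT (evacuation T) = T ↔
      ∀ i : ℕ, 1 < i → i ∈ T.headD [] →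
        (n - i + 2) ∈ T.filterMap (fun r => r.head?) := by
  obtain ⟨hchain, hne, hrows, hcols, hperm⟩ := hT
  obtain ⟨k, hk⟩ := hn
  have hm1 : (n + 1) / 2 = k + 1 := by omega
  have hm2 : (n - 1) / 2 = k := by omega
  cases T with
  | nil => simp [RSKPaper.shape, RSKPaper.hookShape] at hs
  | cons row0 rest =>
    rw [RSKPaper.hookShape, hm1, hm2] at hs
    rw [RSKPaper.shape, List.map_cons] at hs
    obtain ⟨hlen0, hrest⟩ := List.cons.inj hs
    obtain ⟨B, rfl⟩ := Aux.singletons_of_shape rest k hrest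
    have hBlen : B.length = k := by
      have := congrArg List.length hrest; simpa using this
    cases row0 with
    | nil => simp at hlen0
    | cons h0 A =>
      have hAlen : A.length = k := by simpa using hlen0
      have hTH : ((h0 :: A) :: B.map (fun b => [b])) = Aux.H h0 A B := rfl
      have hflat : ((h0 :: A) :: B.map (fun b => [b])).flatten = (h0 :: A) ++ B := by
        simp [Aux.flatten_singletons]
      have hsize : RSKPaper.size ((h0 :: A) :: B.map (fun b => [b])) = n := by
        rw [hTH, Aux.size_H]; omega
      rw [hsize, hflat] at hperm
      have hsrow : (h0 :: A).Pairwise (· < ·) := by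
        have := hrows (h0 :: A) (by simp)
        exact List.isChain_iff_pairwise.mp this
      have hscol : (h0 :: B).Pairwise (· < ·) := by
        have hmemc : (h0 :: B) ∈ transposeT ((h0 :: A) :: B.map (fun b => [b])) := by
          rw [hTH, Aux.transposeT_H]
          exact List.mem_cons_self
        exact List.isChain_iff_pairwise.mp (hcols _ hmemc)
      obtain ⟨hsrow1, hsA⟩ := List.pairwise_cons.mp hsrow
      obtain ⟨hscol1, hsB⟩ := List.pairwise_cons.mp hscol
      have h01 : h0 = 1 := by
        have h1mem : (1 : ℕ) ∈ (h0 :: A) ++ B := by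
          apply hperm.mem_iff.mpr
          simp; omega
        have hge : h0 ∈ List.range' 1 n := hperm.mem_iff.mp (by simp)
        rw [List.mem_range'_1] at hge
        rcases List.mem_append.mp h1mem with h | h
        · rcases List.mem_cons.mp h with h | h
          · omega
          · have := hsrow1 _ h; omega
        · have := hscol1 _ h; omega
      subst h01
      have hperm' : (A ++ B).Perm (List.range' 2 (n - 1)) := by
        have he : (1 :: A) ++ B = 1 :: (A ++ B) := rfl
        rw [he, show n = (n - 1) + 1 by omega, List.range'_succ] at hperm
        exact hperm.cons_inv
      have hmemAB : ∀ x, (x ∈ A ∨ x ∈ B) ↔ (1 + 1 ≤ x ∧ x < 1 + 1 + (n - 1)) := by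
        intro x
        rw [← List.mem_append, hperm'.mem_iff, List.mem_range'_1]
      have hnodup : (A ++ B).Nodup := hperm'.nodup_iff.mpr (List.nodup_range' _ (by omega))
      have hdisj : A.Disjoint B := List.disjoint_of_nodup_append hnodup
      have hlenAB : A.length + B.length = n - 1 := by omega
      have hevac := Aux.evac_hook (n - 1) A B 1 1 hlenAB hsA hsB hdisj hmemAB
      set g : ℕ → ℕ := fun a => n - 1 + 1 + 1 + 1 - a with hg
      have hboundA : ∀ a ∈ A, 2 ≤ a ∧ a ≤ n := by
        intro a ha; have := (hmemAB a).1 (Or.inl ha); omega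
      have hboundB : ∀ b ∈ B, 2 ≤ b ∧ b ≤ n := by
        intro b hb; have := (hmemAB b).1 (Or.inr hb); omega
      rw [hTH, hevac, Aux.transposeT_H, Aux.H_inj]
      have hheadD : (Aux.H 1 A B).headD [] = 1 :: A := rfl
      have hheads : (Aux.H 1 A B).filterMap (fun r => r.head?) = 1 :: B := by
        show ((1 :: A) :: B.map (fun b => [b])).filterMap (fun r => r.head?) = 1 :: B
        rw [List.filterMap_cons, show (1 :: A).head? = some (1 : ℕ) from rfl]
        try dsimp only
        rw [Aux.filterMap_head_singletons]
      rw [hheadD, hheads]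
      constructor
      · rintro ⟨hYA, hXB⟩ i hi1 hiA
        have hiA' : i ∈ A := by
          rcases List.mem_cons.mp hiA with h | h
          · omega
          · exact h
        rw [← hYA, List.mem_reverse, List.mem_map] at hiA'
        obtain ⟨b, hb, rfl⟩ := hiA'
        have hbb := hboundB b hb
        have hb2 : n - g b + 2 = b := by simp only [hg]; omega
        rw [hb2]
        exact List.mem_cons_of_mem _ hb
      · intro hcond
        have hsubset : ∀ a ∈ A, g a ∈ B := by
          intro a ha
          have hba := hboundA a ha
          have h2 := hcond a (by omega) (List.mem_cons_of_mem _ ha)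
          have he : n - a + 2 = g a := by simp only [hg]; omega
          rw [he] at h2
          rcases List.mem_cons.mp h2 with h | h
          · exfalso; simp only [hg] at h; omega
          · exact h
        have hnodupA : A.Nodup := (List.nodup_append.mp hnodup).1
        have hnodupX : ((A.map g).reverse).Nodup := by
          rw [List.nodup_reverse]
          apply List.Nodup.map_on _ hnodupA
          intro x hx y hy hxy
          have h1 := hboundA x hx
          have h2 := hboundA y hy
          simp only [hg] at hxy; omega
        have hsubX : ((A.map g).reverse) ⊆ B := by
          intro x hx
          rw [List.mem_reverse, List.mem_map] at hx
          obtain ⟨a, ha, rfl⟩ := hx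
          exact hsubset a ha
        have hpermXB : ((A.map g).reverse).Perm B :=
          (List.subperm_of_subset hnodupX hsubX).perm_of_length_le
            (by simp [hAlen, hBlen])
        have hsortX : ((A.map g).reverse).Pairwise (· < ·) := by
          rw [List.pairwise_reverse]
          apply List.pairwise_map.mpr
          apply List.Pairwise.imp_of_mem ?_ hsA
          intro a b ha hb hab
          have h1 := hboundA a ha
          have h2 := hboundA b hb
          show g b < g a
          simp only [hg]; omega
        haveI : IsAntisymm ℕ (· < ·) := ⟨fun a b h h' => absurd h' (lt_asymm h)⟩
        have hXB : ((A.map g).reverse) = B := hpermXB.eq_of_pairwise' hsortX hsB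
        have hYA : ((B.map g).reverse) = A := by
          rw [← hXB, List.map_reverse, List.reverse_reverse, List.map_map]
          have hid : ∀ a ∈ A, (g ∘ g) a = a := by
            intro a ha
            have := hboundA a ha
            simp only [Function.comp, hg]; omega
          rw [List.map_congr_left hid]; simp
        exact ⟨hYA, hXB⟩
end
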